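/- (Vanishing of the cross-channel Taylor coefficients B_m, equations (56)–(58)) Let (a_n) be the Prouhet–Thue–Morse sequence, M ≥ 0, N = 2^{M+1}. For complex numbers X, Y define, for each n ∈ {0,…,N−1}: if n is even, S_{V,n} = (1−a_n)·X + a_n·(−conj(Y)) and S_{H,n} = (1−a_n)·Y + a_n·conj(X); if n is odd, S_{V,n} = a_n·(−conj(Y)) + (1−a_n)·(−X) and S_{H,n} = a_n·conj(X) + (1−a_n)·(−Y). Then for every 0 ≤ m ≤ M, Σ_{n=0}^{N−1} n^m·S_{V,n}·conj(S_{H,n}) = ( Σ_{n=0}^{N−1} (−1)^{a_n}·n^m )·X·conj(Y) = 0. -/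
import Mathlib

open scoped BigOperators

section Aux
variable (a : ℕ → ℕ) (ha0 : a 0 = 0)
    (hae : ∀ k, a (2 * k) = a k) (hao : ∀ k, a (2 * k + 1) = 1 - a k)

include ha0 hae hao

lemma ptm_a_le_one : ∀ n, a n ≤ 1 := by
  intro n
  induction n using Nat.strong_induction_on with
  | _ n ih =>
    rcases Nat.even_or_odd n with ⟨k, hk⟩ | ⟨k, hk⟩
    · subst hk
      rcases Nat.eq_zero_or_pos k with rfl | hk0
      · simp [ha0]
      · rw [show k + k = 2 * k by ring, hae]
        exact ih k (by omega)
    · subst hk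
      rw [show 2 * k + 1 = 2 * k + 1 from rfl, hao]; omega

lemma ptm_a_flip : ∀ k, ∀ n < 2 ^ k, a (n + 2 ^ k) = 1 - a n := by
  intro k
  induction k with
  | zero =>
    intro n hn
    interval_cases n
    rw [show 0 + 2 ^ 0 = 2 * 0 + 1 from rfl, hao, ha0]
  | succ k ih =>
    intro n hn
    have h2 : (2:ℕ) ^ (k + 1) = 2 ^ k + 2 ^ k := by ring
    rcases Nat.even_or_odd n with ⟨j, hj⟩ | ⟨j, hj⟩
    · have hj' : j < 2 ^ k := by omega
      rw [show n + 2 ^ (k+1) = 2 * (j + 2 ^ k) by omega, hae, ih j hj',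
        show n = 2 * j by omega, hae]
    · have hj' : j < 2 ^ k := by omega
      rw [show n + 2 ^ (k+1) = 2 * (j + 2 ^ k) + 1 by omega, hao, ih j hj', hj, hao]

lemma ptm_prouhet : ∀ k, ∀ m < k, ∀ q : ℤ,
    ∑ n ∈ Finset.range (2 ^ k), (-1 : ℤ) ^ (a n) * ((n : ℤ) + q) ^ m = 0 := by
  intro k
  induction k with
  | zero => intro m hm; omega
  | succ k ih =>
    intro m hm q
    have h2 : (2:ℕ) ^ (k + 1) = 2 ^ k + 2 ^ k := by ring
    rw [h2, Finset.sum_range_add]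
    have step : ∑ n ∈ Finset.range (2 ^ k),
        (-1 : ℤ) ^ (a (2 ^ k + n)) * (((2 ^ k + n : ℕ) : ℤ) + q) ^ m
        = ∑ n ∈ Finset.range (2 ^ k),
          -((-1 : ℤ) ^ (a n) * (((n : ℤ) + q) + (2 ^ k : ℤ)) ^ m) := by
      refine Finset.sum_congr rfl fun n hn => ?_
      rw [Finset.mem_range] at hn
      rw [add_comm (2 ^ k) n, ptm_a_flip a ha0 hae hao k n hn]
      have hb := ptm_a_le_one a ha0 hae hao n
      push_cast
      rcases Nat.le_one_iff_eq_zero_or_eq_one.mp hb with h | h <;> rw [h] <;> ring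
    rw [step, ← Finset.sum_add_distrib]
    have hterm : ∀ n : ℕ,
        (-1 : ℤ) ^ (a n) * ((n : ℤ) + q) ^ m
          + -((-1 : ℤ) ^ (a n) * (((n : ℤ) + q) + (2 ^ k : ℤ)) ^ m)
        = ∑ j ∈ Finset.range m,
            -((2 ^ k : ℤ) ^ (m - j) * (m.choose j : ℤ)
              * ((-1 : ℤ) ^ (a n) * ((n : ℤ) + q) ^ j)) := by
      intro n
      rw [add_pow ((n : ℤ) + q) ((2 : ℤ) ^ k) m, Finset.sum_range_succ, Nat.sub_self,
        pow_zero, Nat.choose_self, Nat.cast_one, mul_one, mul_one, mul_add,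
        Finset.mul_sum]
      have hswap : ∑ j ∈ Finset.range m,
          -((2 ^ k : ℤ) ^ (m - j) * (m.choose j : ℤ)
            * ((-1 : ℤ) ^ (a n) * ((n : ℤ) + q) ^ j))
          = -∑ j ∈ Finset.range m,
            (-1 : ℤ) ^ (a n) * (((n : ℤ) + q) ^ j * (2 ^ k : ℤ) ^ (m - j) * (m.choose j : ℤ)) := by
        rw [← Finset.sum_neg_distrib]
        exact Finset.sum_congr rfl fun j _ => by ring
      rw [hswap]
      ring
    calc ∑ n ∈ Finset.range (2 ^ k),
          ((-1 : ℤ) ^ (a n) * ((n : ℤ) + q) ^ m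
            + -((-1 : ℤ) ^ (a n) * (((n : ℤ) + q) + (2 ^ k : ℤ)) ^ m))
        = ∑ n ∈ Finset.range (2 ^ k), ∑ j ∈ Finset.range m,
            -((2 ^ k : ℤ) ^ (m - j) * (m.choose j : ℤ)
              * ((-1 : ℤ) ^ (a n) * ((n : ℤ) + q) ^ j)) :=
          Finset.sum_congr rfl fun n _ => hterm n
      _ = ∑ j ∈ Finset.range m, ∑ n ∈ Finset.range (2 ^ k),
            -((2 ^ k : ℤ) ^ (m - j) * (m.choose j : ℤ)
              * ((-1 : ℤ) ^ (a n) * ((n : ℤ) + q) ^ j)) := Finset.sum_comm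
      _ = 0 := by
          refine Finset.sum_eq_zero fun j hj => ?_
          rw [Finset.mem_range] at hj
          have hjk : j < k := by omega
          calc ∑ n ∈ Finset.range (2 ^ k),
              -((2 ^ k : ℤ) ^ (m - j) * (m.choose j : ℤ)
                * ((-1 : ℤ) ^ (a n) * ((n : ℤ) + q) ^ j))
              = -((2 ^ k : ℤ) ^ (m - j) * (m.choose j : ℤ)
                  * ∑ n ∈ Finset.range (2 ^ k), (-1 : ℤ) ^ (a n) * ((n : ℤ) + q) ^ j) := by
                rw [Finset.mul_sum, ← Finset.sum_neg_distrib]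
            _ = 0 := by rw [ih j hjk q]; ring

end Aux

theorem stmt17 (M : ℕ) (a : ℕ → ℕ) (ha0 : a 0 = 0)
    (hae : ∀ k, a (2 * k) = a k) (hao : ∀ k, a (2 * k + 1) = 1 - a k)
    (X Y : ℂ) (SV SH : ℕ → ℂ)
    (hSVe : ∀ n, n % 2 = 0 →
      SV n = (1 - (a n : ℂ)) * X + (a n : ℂ) * (-(starRingEnd ℂ) Y))
    (hSHe : ∀ n, n % 2 = 0 →
      SH n = (1 - (a n : ℂ)) * Y + (a n : ℂ) * ((starRingEnd ℂ) X))
    (hSVo : ∀ n, n % 2 = 1 →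
      SV n = (a n : ℂ) * (-(starRingEnd ℂ) Y) + (1 - (a n : ℂ)) * (-X))
    (hSHo : ∀ n, n % 2 = 1 →
      SH n = (a n : ℂ) * ((starRingEnd ℂ) X) + (1 - (a n : ℂ)) * (-Y)) :
    ∀ m ≤ M,
      (∑ n ∈ Finset.range (2 ^ (M + 1)), (n : ℂ) ^ m * (SV n * (starRingEnd ℂ) (SH n))
        = ((∑ n ∈ Finset.range (2 ^ (M + 1)), (-1 : ℤ) ^ (a n) * (n : ℤ) ^ m : ℤ) : ℂ)
            * (X * (starRingEnd ℂ) Y)) ∧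
      (∑ n ∈ Finset.range (2 ^ (M + 1)), (n : ℂ) ^ m * (SV n * (starRingEnd ℂ) (SH n))
        = 0) := by
  intro m hm
  have hterm : ∀ n, SV n * (starRingEnd ℂ) (SH n)
      = ((-1 : ℤ) ^ (a n) : ℂ) * (X * (starRingEnd ℂ) Y) := by
    intro n
    have hb := ptm_a_le_one a ha0 hae hao n
    rcases Nat.mod_two_eq_zero_or_one n with hp | hp
    · rw [hSVe n hp, hSHe n hp]
      rcases Nat.le_one_iff_eq_zero_or_eq_one.mp hb with h | h <;>
        simp [h, map_add, map_mul, map_sub, map_neg] <;> ring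
    · rw [hSVo n hp, hSHo n hp]
      rcases Nat.le_one_iff_eq_zero_or_eq_one.mp hb with h | h <;>
        simp [h, map_add, map_mul, map_sub, map_neg] <;> ring
  have hzero : (∑ n ∈ Finset.range (2 ^ (M + 1)), (-1 : ℤ) ^ (a n) * (n : ℤ) ^ m) = 0 := by
    have := ptm_prouhet a ha0 hae hao (M + 1) m (by omega) 0
    simpa using this
  have heq : ∑ n ∈ Finset.range (2 ^ (M + 1)), (n : ℂ) ^ m * (SV n * (starRingEnd ℂ) (SH n))
      = ((∑ n ∈ Finset.range (2 ^ (M + 1)), (-1 : ℤ) ^ (a n) * (n : ℤ) ^ m : ℤ) : ℂ)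
          * (X * (starRingEnd ℂ) Y) := by
    push_cast
    rw [Finset.sum_mul]
    refine Finset.sum_congr rfl fun n _ => ?_
    rw [hterm n]
    push_cast
    ring
  exact ⟨heq, by rw [heq, hzero]; simp⟩
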